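/- Let B be a uniform Q_p-Banach algebra with spectral norm |·| and unit ball B°. For an integer s ≥ 0, any element b of B°× of the form b = ω·u with ω ∈ μ_{p-1} ⊆ Z_p× a (p-1)-st root of unity and u ∈ 1 + pZ_p + p^{s+1}B°, satisfies log(u)/log(1+p) ∈ Z_p + p^s B°. -/

import Mathlib

open scoped Topology

/-!
STATEMENT 1: Let `B` be a uniform `ℚ_p`-Banach algebra with spectral norm `‖·‖` and unit ball
`B°`.  For an integer `s ≥ 0`, any element `b ∈ B°ˣ` of the form `b = ω·u` with
`ω ∈ μ_{p-1} ⊆ ℤ_pˣ` a `(p-1)`-st root of unity and `u ∈ 1 + pℤ_p + p^{s+1}B°` satisfies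
`log(u)/log(1+p) ∈ ℤ_p + p^s B°`.

Here `log` is the `p`-adic logarithm (convergent on `1 + pℤ_p + p^{s+1}B°`; we assume `p` odd
so that these elements lie in the region of convergence), `log(1+p)` has `p`-adic valuation
`1`, and `p^{s+1}B° = {b ∈ B° : ‖b‖ ≤ p^{-s-1}}`.  "Uniform" means the norm is
power-multiplicative (`huniform`); membership of `log(u)/log(1+p)` in `ℤ_p + p^s B°` is
expressed as `log u = log(1+p)·(z + c)` with `z ∈ ℤ_p` and `‖c‖ ≤ p^{-s}`.  Only the factor
`u` of `b = ω·u` intervenes in the conclusion.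
-/

/-- The `p`-adic logarithm series `log x = ∑_{n≥1} (-1)^{n+1} (x-1)^n / n` in a
`ℚ_p`-Banach algebra. -/
noncomputable def plog (p : ℕ) [Fact p.Prime] (B : Type*) [NormedCommRing B]
    [NormedAlgebra ℚ_[p] B] (x : B) : B :=
  ∑' n : ℕ, ((-1 : ℚ_[p]) ^ (n + 1) * ((n : ℚ_[p]))⁻¹) • (x - 1) ^ n

namespace PlogAux

/-- coefficient of the log series -/
noncomputable def a (p : ℕ) [Fact p.Prime] (n : ℕ) : ℚ_[p] :=
  (-1 : ℚ_[p]) ^ (n + 1) * ((n : ℚ_[p]))⁻¹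

variable (p : ℕ) [Fact p.Prime]

lemma a_zero : a p 0 = 0 := by simp [a]

lemma a_one : a p 1 = 1 := by norm_num [a]

lemma norm_a (n : ℕ) (hn : n ≠ 0) : ‖a p n‖ = (p : ℝ) ^ (padicValNat p n : ℤ) := by
  rw [a, norm_mul, norm_pow, norm_neg, norm_one, one_pow, one_mul, norm_inv,
    Padic.norm_eq_zpow_neg_valuation (by exact_mod_cast hn), Padic.valuation_natCast, ← zpow_neg, neg_neg]

lemma pow_val_le (n : ℕ) (hn : n ≠ 0) : p ^ padicValNat p n ≤ n :=
  Nat.le_of_dvd (Nat.pos_of_ne_zero hn) pow_padicValNat_dvd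

lemma val_lt (n : ℕ) (hn : n ≠ 0) : padicValNat p n < n := by
  have h2 : 2 ≤ p := (Fact.out : p.Prime).two_le
  calc padicValNat p n < 2 ^ padicValNat p n := Nat.lt_two_pow_self
    _ ≤ p ^ padicValNat p n := Nat.pow_le_pow_left h2 _
    _ ≤ n := pow_val_le p n hn

lemma lt_three_pow (n : ℕ) (hn : 2 ≤ n) : n < 3 ^ (n - 1) := by
  obtain ⟨m, rfl⟩ : ∃ m, n = m + 2 := ⟨n - 2, by omega⟩
  clear hn
  induction m with
  | zero => norm_num
  | succ k ih =>
    have h3 : 3 ^ (k + 2 - 1) * 3 = 3 ^ (k + 1 + 2 - 1) := by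
      rw [← pow_succ]
      norm_num
    omega

lemma val_le_sub_two (hp : p ≠ 2) (n : ℕ) (hn : 2 ≤ n) : padicValNat p n ≤ n - 2 := by
  by_contra h
  have hv : n - 1 ≤ padicValNat p n := by omega
  have h3 : 3 ≤ p := by
    have := (Fact.out : p.Prime).two_le
    rcases Nat.lt_or_ge p 3 with h' | h'
    · interval_cases p <;> simp_all
    · exact h'
  have : 3 ^ (n - 1) ≤ n :=
    calc 3 ^ (n - 1) ≤ p ^ (n - 1) := Nat.pow_le_pow_left h3 _
      _ ≤ p ^ padicValNat p n := Nat.pow_le_pow_right (by omega) hv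
      _ ≤ n := pow_val_le p n (by omega)
  exact absurd this (by simpa using (lt_three_pow n hn).not_ge)

lemma norm_a_le_one_sub (n : ℕ) (hn : 1 ≤ n) : ‖a p n‖ ≤ (p : ℝ) ^ ((n : ℤ) - 1) := by
  rw [norm_a p n (by omega)]
  have hp1 : (1 : ℝ) ≤ p := by exact_mod_cast (Fact.out : p.Prime).two_le.trans' (by norm_num)
  exact zpow_le_zpow_right₀ hp1 (by have := val_lt p n (by omega); omega)

lemma norm_a_le_two_sub (hp : p ≠ 2) (n : ℕ) (hn : 2 ≤ n) :
    ‖a p n‖ ≤ (p : ℝ) ^ ((n : ℤ) - 2) := by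
  rw [norm_a p n (by omega)]
  have hp1 : (1 : ℝ) ≤ p := by exact_mod_cast (Fact.out : p.Prime).two_le.trans' (by norm_num)
  exact zpow_le_zpow_right₀ hp1 (by have := val_le_sub_two p hp n hn; omega)

lemma norm_a_le_natCast (n : ℕ) : ‖a p n‖ ≤ (n : ℝ) := by
  rcases eq_or_ne n 0 with rfl | hn
  · simp [a_zero]
  · rw [norm_a p n hn]
    calc ((p:ℝ) ^ (padicValNat p n : ℤ)) = ((p ^ padicValNat p n : ℕ) : ℝ) := by
          rw [zpow_natCast]; push_cast; ring
      _ ≤ (n : ℝ) := by exact_mod_cast pow_val_le p n hn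

section Banach

variable {B : Type*} [NormedCommRing B] [NormedAlgebra ℚ_[p] B] [CompleteSpace B]

lemma norm_pow_le_of_norm_one (h1 : ‖(1 : B)‖ = 1) (x : B) (n : ℕ) : ‖x ^ n‖ ≤ ‖x‖ ^ n := by
  cases n with
  | zero => simp [h1]
  | succ k => exact norm_pow_le' x k.succ_pos

lemma summable_plog (h1 : ‖(1 : B)‖ = 1) {x : B} (hx : ‖x‖ < 1) :
    Summable fun n => a p n • x ^ n := by
  refine Summable.of_norm_bounded (g := fun n => (n : ℝ) ^ 1 * ‖x‖ ^ n)
    (summable_pow_mul_geometric_of_norm_lt_one 1 (by simpa using hx)) fun n => ?_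
  calc ‖a p n • x ^ n‖ ≤ ‖a p n‖ * ‖x ^ n‖ := norm_smul_le _ _
    _ ≤ (n : ℝ) * ‖x‖ ^ n := by
        exact mul_le_mul (norm_a_le_natCast p n) (norm_pow_le_of_norm_one h1 x n)
          (norm_nonneg _) n.cast_nonneg
    _ = (n : ℝ) ^ 1 * ‖x‖ ^ n := by ring

lemma plog_eq_tsum (x : B) : plog p B x = ∑' n, a p n • (x - 1) ^ n := rfl

end Banach

lemma norm_p_lt_one : ‖(p : ℚ_[p])‖ < 1 := by
  rw [Padic.norm_p]
  have : (1 : ℝ) < p := by exact_mod_cast (Fact.out : p.Prime).one_lt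
  rw [inv_lt_one_iff₀]; right; exact this

lemma norm_L_sub_p (hp : p ≠ 2) : ‖plog p ℚ_[p] (1 + (p : ℚ_[p])) - p‖ ≤ (p : ℝ) ^ (-2 : ℤ) := by
  have hp0 : (p : ℝ) ≠ 0 := by exact_mod_cast (Fact.out : p.Prime).ne_zero
  have hsum : Summable fun n => a p n • ((1 + (p : ℚ_[p])) - 1) ^ n :=
    summable_plog p norm_one (by simpa using norm_p_lt_one p)
  have key := hsum.tsum_eq_add_tsum_ite 1
  rw [plog_eq_tsum]
  have h1 : a p 1 • ((1 + (p : ℚ_[p])) - 1) ^ 1 = (p : ℚ_[p]) := by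
    simp [a_one]
  rw [key, h1, add_sub_cancel_left]
  refine IsUltrametricDist.norm_tsum_le_of_forall_le_of_nonneg (by positivity) fun n => ?_
  rcases eq_or_ne n 1 with rfl | hn1
  · rw [if_pos rfl, norm_zero]; positivity
  rw [if_neg hn1]
  rcases eq_or_ne n 0 with rfl | hn0
  · simp only [a_zero, zero_smul, norm_zero]; positivity
  have hn2 : 2 ≤ n := by omega
  calc ‖a p n • ((1 + (p : ℚ_[p])) - 1) ^ n‖ ≤ ‖a p n‖ * ‖((p : ℚ_[p])) ^ n‖ := by
        rw [add_sub_cancel_left]; exact norm_smul_le _ _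
    _ ≤ (p : ℝ) ^ ((n : ℤ) - 2) * (p : ℝ) ^ (-(n : ℤ)) := by
        rw [norm_pow, Padic.norm_p, inv_pow, ← zpow_natCast, ← zpow_neg]
        exact mul_le_mul_of_nonneg_right (norm_a_le_two_sub p hp n hn2) (by positivity)
    _ = (p : ℝ) ^ (-2 : ℤ) := by
        rw [← zpow_add₀ hp0]; ring_nf

lemma norm_L (hp : p ≠ 2) : ‖plog p ℚ_[p] (1 + (p : ℚ_[p]))‖ = (p : ℝ)⁻¹ := by
  have h2 : ‖plog p ℚ_[p] (1 + (p : ℚ_[p])) - p‖ ≤ (p : ℝ) ^ (-2 : ℤ) := norm_L_sub_p p hp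
  have hlt : (p : ℝ) ^ (-2 : ℤ) < (p : ℝ)⁻¹ := by
    have hp1 : (1 : ℝ) < p := by exact_mod_cast (Fact.out : p.Prime).one_lt
    rw [← zpow_neg_one]
    exact zpow_lt_zpow_right₀ hp1 (by norm_num)
  have hne : ‖(p : ℚ_[p])‖ ≠ ‖plog p ℚ_[p] (1 + (p : ℚ_[p])) - p‖ := by
    rw [Padic.norm_p]
    exact (h2.trans_lt hlt).ne'
  have := IsUltrametricDist.norm_add_eq_max_of_norm_ne_norm
    (x := (p : ℚ_[p])) (y := plog p ℚ_[p] (1 + (p : ℚ_[p])) - p) hne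
  rw [add_sub_cancel] at this
  rw [this, Padic.norm_p, max_eq_left (le_of_lt (h2.trans_lt hlt))]

end PlogAux

namespace PlogAux

lemma norm_pt_le (p : ℕ) [Fact p.Prime] (t : ℤ_[p]) : ‖(p : ℚ_[p]) * t‖ ≤ (p : ℝ)⁻¹ := by
  rw [norm_mul, Padic.norm_p]
  calc (p : ℝ)⁻¹ * ‖(t : ℚ_[p])‖ ≤ (p : ℝ)⁻¹ * 1 :=
        mul_le_mul_of_nonneg_left t.2 (by positivity)
    _ = (p : ℝ)⁻¹ := mul_one _

lemma inv_p_lt_one (p : ℕ) [Fact p.Prime] : (p : ℝ)⁻¹ < 1 := by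
  have : (1 : ℝ) < p := by exact_mod_cast (Fact.out : p.Prime).one_lt
  rw [inv_lt_one_iff₀]; right; exact this

lemma norm_alpha (p : ℕ) [Fact p.Prime] (t : ℤ_[p]) :
    ‖plog p ℚ_[p] (1 + (p : ℚ_[p]) * t)‖ ≤ (p : ℝ)⁻¹ := by
  have hp0 : (p : ℝ) ≠ 0 := by exact_mod_cast (Fact.out : p.Prime).ne_zero
  rw [plog_eq_tsum]
  refine IsUltrametricDist.norm_tsum_le_of_forall_le_of_nonneg (by positivity) fun n => ?_
  rcases eq_or_ne n 0 with rfl | hn0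
  · simp only [a_zero, zero_smul, norm_zero]; positivity
  have hx : ‖(1 + (p : ℚ_[p]) * t) - 1‖ ≤ (p : ℝ)⁻¹ := by
    rw [add_sub_cancel_left]; exact norm_pt_le p t
  calc ‖a p n • ((1 + (p : ℚ_[p]) * t) - 1) ^ n‖
      = ‖a p n‖ * ‖(1 + (p : ℚ_[p]) * t) - 1‖ ^ n := by rw [norm_smul, norm_pow]
    _ ≤ (p : ℝ) ^ ((n : ℤ) - 1) * (p : ℝ) ^ (-(n : ℤ)) := by
        refine mul_le_mul (norm_a_le_one_sub p n (by omega)) ?_ (by positivity) (by positivity)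
        calc ‖(1 + (p : ℚ_[p]) * t) - 1‖ ^ n ≤ ((p : ℝ)⁻¹) ^ n :=
              pow_le_pow_left₀ (norm_nonneg _) hx n
          _ = (p : ℝ) ^ (-(n : ℤ)) := by rw [inv_pow, ← zpow_natCast, ← zpow_neg]
    _ = (p : ℝ)⁻¹ := by
        rw [← zpow_add₀ hp0, ← zpow_neg_one]
        congr 1
        ring

end PlogAux

open PlogAux in
theorem log_div_log_one_add_p_mem (p : ℕ) [Fact p.Prime] (hp : p ≠ 2)
    (B : Type*) [NormedCommRing B] [NormedAlgebra ℚ_[p] B] [CompleteSpace B]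
    [IsUltrametricDist B]
    -- the norm of `B` is the spectral (power-multiplicative) norm:
    (huniform : ∀ (x : B) (n : ℕ), ‖x ^ n‖ = ‖x‖ ^ n)
    (s : ℕ) (u : B) (hu_unit : IsUnit u)
    -- `u ∈ 1 + pℤ_p + p^{s+1}B°`:
    (t : ℤ_[p]) (b : B) (hb : ‖b‖ ≤ (p : ℝ) ^ (-(s + 1 : ℤ)))
    (hu : u = 1 + algebraMap ℚ_[p] B ((p : ℚ_[p]) * (t : ℚ_[p])) + b) :
    -- `log(u)/log(1+p) ∈ ℤ_p + p^s B°`: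
    ∃ (z : ℤ_[p]) (c : B), ‖c‖ ≤ (p : ℝ) ^ (-(s : ℤ)) ∧
      plog p B u =
        algebraMap ℚ_[p] B (plog p ℚ_[p] (1 + (p : ℚ_[p]))) *
          (algebraMap ℚ_[p] B ((z : ℚ_[p])) + c) := by
  have hprime : p.Prime := Fact.out
  have hp0 : (p : ℝ) ≠ 0 := by exact_mod_cast hprime.ne_zero
  have hp1 : (1 : ℝ) < p := by exact_mod_cast hprime.one_lt
  rcases eq_or_ne (‖(1 : B)‖) 0 with h10 | h1ne
  · have hB : (1 : B) = 0 := norm_eq_zero.mp h10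
    have : Subsingleton B := subsingleton_of_zero_eq_one hB.symm
    refine ⟨0, 0, ?_, Subsingleton.elim _ _⟩
    rw [norm_zero]; positivity
  have h1 : ‖(1 : B)‖ = 1 := by
    have h1sq : ‖(1 : B)‖ * ‖(1 : B)‖ = ‖(1 : B)‖ * 1 := by
      rw [mul_one]
      calc ‖(1 : B)‖ * ‖(1 : B)‖ = ‖(1 : B)‖ ^ 2 := by ring
        _ = ‖(1 : B) ^ 2‖ := (huniform 1 2).symm
        _ = ‖(1 : B)‖ := by rw [one_pow]
    exact mul_left_cancel₀ h1ne h1sq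
  set L := plog p ℚ_[p] (1 + (p : ℚ_[p])) with hLdef
  have hLnorm : ‖L‖ = (p : ℝ)⁻¹ := norm_L p hp
  have hL0 : L ≠ 0 := by
    intro h
    rw [h, norm_zero] at hLnorm
    exact absurd hLnorm.symm (by positivity)
  set α := plog p ℚ_[p] (1 + (p : ℚ_[p]) * t) with hαdef
  have hαnorm : ‖α‖ ≤ (p : ℝ)⁻¹ := norm_alpha p t
  have hz : ‖α * L⁻¹‖ ≤ 1 := by
    rw [norm_mul, norm_inv, hLnorm, inv_inv]
    calc ‖α‖ * (p : ℝ) ≤ (p : ℝ)⁻¹ * p :=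
          mul_le_mul_of_nonneg_right hαnorm (by positivity)
      _ = 1 := inv_mul_cancel₀ hp0
  set Y : B := algebraMap ℚ_[p] B ((p : ℚ_[p]) * t) with hYdef
  have hYnorm : ‖Y‖ ≤ (p : ℝ)⁻¹ := by
    rw [hYdef, norm_algebraMap, h1, mul_one]
    exact norm_pt_le p t
  have hbweak : ‖b‖ ≤ (p : ℝ)⁻¹ := by
    refine hb.trans ?_
    rw [← zpow_neg_one]
    exact zpow_le_zpow_right₀ hp1.le (by omega)
  have hXnorm : ‖u - 1‖ ≤ (p : ℝ)⁻¹ := by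
    have : u - 1 = Y + b := by rw [hu]; ring
    rw [this]
    exact (IsUltrametricDist.norm_add_le_max _ _).trans (max_le hYnorm hbweak)
  have hSX : Summable fun n => a p n • (u - 1) ^ n :=
    summable_plog p h1 (hXnorm.trans_lt (inv_p_lt_one p))
  have hSY : Summable fun n => a p n • Y ^ n :=
    summable_plog p h1 (hYnorm.trans_lt (inv_p_lt_one p))
  have hSq : Summable fun n => a p n • ((p : ℚ_[p]) * t) ^ n :=
    summable_plog p norm_one ((norm_pt_le p t).trans_lt (inv_p_lt_one p))
  -- express `algebraMap α` as a tsum in `B`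
  have hA : algebraMap ℚ_[p] B α = ∑' n, a p n • Y ^ n := by
    rw [hαdef, plog_eq_tsum, add_sub_cancel_left]
    calc algebraMap ℚ_[p] B (∑' n, a p n • ((p : ℚ_[p]) * t) ^ n)
        = ∑' n, algebraMap ℚ_[p] B (a p n • ((p : ℚ_[p]) * t) ^ n) :=
          (algebraMapCLM ℚ_[p] B).map_tsum hSq
      _ = ∑' n, a p n • Y ^ n := by
          refine tsum_congr fun n => ?_
          rw [smul_eq_mul, map_mul, map_pow, ← Algebra.smul_def]
  -- the key estimate
  have hD : ‖plog p B u - algebraMap ℚ_[p] B α‖ ≤ (p : ℝ) ^ (-(s + 1 : ℤ)) := by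
    rw [plog_eq_tsum, hA, ← hSX.tsum_sub hSY]
    refine IsUltrametricDist.norm_tsum_le_of_forall_le_of_nonneg (by positivity) fun n => ?_
    rcases eq_or_ne n 0 with rfl | hn0
    · simp only [a_zero, zero_smul, sub_zero, norm_zero]; positivity
    have hn1 : 1 ≤ n := by omega
    rw [← smul_sub]
    have hgeom : (u - 1) ^ n - Y ^ n =
        (∑ i ∈ Finset.range n, (u - 1) ^ i * Y ^ (n - 1 - i)) * ((u - 1) - Y) :=
      (geom_sum₂_mul _ _ n).symm
    have hby : (u - 1) - Y = b := by rw [hu]; ring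
    have hSnorm : ‖∑ i ∈ Finset.range n, (u - 1) ^ i * Y ^ (n - 1 - i)‖ ≤ ((p : ℝ)⁻¹) ^ (n - 1) := by
      refine IsUltrametricDist.norm_sum_le_of_forall_le_of_nonneg (by positivity) fun i hi => ?_
      have hin : i + (n - 1 - i) = n - 1 := by
        have := Finset.mem_range.mp hi; omega
      calc ‖(u - 1) ^ i * Y ^ (n - 1 - i)‖ ≤ ‖(u - 1) ^ i‖ * ‖Y ^ (n - 1 - i)‖ := norm_mul_le _ _
        _ ≤ ‖u - 1‖ ^ i * ‖Y‖ ^ (n - 1 - i) :=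
            mul_le_mul (norm_pow_le_of_norm_one h1 _ _) (norm_pow_le_of_norm_one h1 _ _)
              (norm_nonneg _) (by positivity)
        _ ≤ ((p : ℝ)⁻¹) ^ i * ((p : ℝ)⁻¹) ^ (n - 1 - i) :=
            mul_le_mul (pow_le_pow_left₀ (norm_nonneg _) hXnorm i)
              (pow_le_pow_left₀ (norm_nonneg _) hYnorm _) (by positivity) (by positivity)
        _ = ((p : ℝ)⁻¹) ^ (n - 1) := by rw [← pow_add, hin]
    have hqz : ((p : ℝ)⁻¹) ^ (n - 1) = (p : ℝ) ^ (-((n : ℤ) - 1)) := by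
      rw [inv_pow, ← zpow_natCast, ← zpow_neg]
      congr 1
      omega
    calc ‖a p n • ((u - 1) ^ n - Y ^ n)‖ ≤ ‖a p n‖ * ‖(u - 1) ^ n - Y ^ n‖ := norm_smul_le _ _
      _ ≤ (p : ℝ) ^ ((n : ℤ) - 1) * ((p : ℝ) ^ (-((n : ℤ) - 1)) * (p : ℝ) ^ (-(s + 1 : ℤ))) := by
          refine mul_le_mul (norm_a_le_one_sub p n hn1) ?_ (norm_nonneg _) (by positivity)
          rw [hgeom, hby, ← hqz]
          exact (norm_mul_le _ _).trans
            (mul_le_mul hSnorm hb (norm_nonneg _) (by positivity))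
      _ = (p : ℝ) ^ (-(s + 1 : ℤ)) := by
          rw [← zpow_add₀ hp0, ← zpow_add₀ hp0]
          congr 1
          ring
  refine ⟨⟨α * L⁻¹, hz⟩, algebraMap ℚ_[p] B L⁻¹ * (plog p B u - algebraMap ℚ_[p] B α), ?_, ?_⟩
  · calc ‖algebraMap ℚ_[p] B L⁻¹ * (plog p B u - algebraMap ℚ_[p] B α)‖
        ≤ ‖algebraMap ℚ_[p] B L⁻¹‖ * ‖plog p B u - algebraMap ℚ_[p] B α‖ := norm_mul_le _ _
      _ ≤ (p : ℝ) * (p : ℝ) ^ (-(s + 1 : ℤ)) := by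
          refine mul_le_mul ?_ hD (norm_nonneg _) (by positivity)
          rw [norm_algebraMap, h1, mul_one, norm_inv, hLnorm, inv_inv]
      _ = (p : ℝ) ^ (-(s : ℤ)) := by
          rw [show (-(s : ℤ)) = 1 + -(s + 1 : ℤ) by ring, zpow_add₀ hp0, zpow_one]
  · have hzc : ((⟨α * L⁻¹, hz⟩ : ℤ_[p]) : ℚ_[p]) = α * L⁻¹ := rfl
    rw [hzc]
    have e1 : L * (α * L⁻¹) = α := by field_simp
    rw [mul_add, ← map_mul, e1, ← mul_assoc, ← map_mul, mul_inv_cancel₀ hL0, map_one, one_mul]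
    ring
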